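/- Let μ ∈ ℕ and let ν ≥ 1 be real, and let F(x) := ∑_{ℓ=0}^∞ (−1)^ℓ · binom(ν+μ, μ+ℓ+1) · binom(μ+ℓ, μ) · x^ℓ for |x| < 1. Then for every natural number r with r < ν, the r-th derivative of F satisfies lim_{x→1⁻} F^{(r)}(x) = (−1)^r · (μ+1)(μ+2)⋯(μ+r), where the empty product (r = 0) equals 1. -/

import Mathlib

open Filter

noncomputable section

/-- The generalized binomial coefficient `binom(x, n) = x(x−1)⋯(x−n+1)/n!`. -/
def rchoose (x : ℝ) (n : ℕ) : ℝ := (∏ i ∈ Finset.range n, (x - i)) / (n.factorial : ℝ)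

/-- The coefficient `(−1)^ℓ · binom(ν+μ, μ+ℓ+1) · binom(μ+ℓ, μ)`. -/
def Fcoeff (μ : ℕ) (ν : ℝ) (ℓ : ℕ) : ℝ :=
  (-1 : ℝ) ^ ℓ * rchoose (ν + μ) (μ + ℓ + 1) * rchoose ((μ : ℝ) + ℓ) μ

/-- The power series `F(x) = ∑_{ℓ=0}^∞ (−1)^ℓ binom(ν+μ, μ+ℓ+1) binom(μ+ℓ, μ) x^ℓ`. -/
def Fseries (μ : ℕ) (ν : ℝ) (x : ℝ) : ℝ := ∑' ℓ : ℕ, Fcoeff μ ν ℓ * x ^ ℓ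

open Finset Set

namespace Aux

lemma rchoose_zero (x : ℝ) : rchoose x 0 = 1 := by simp [rchoose]

lemma rchoose_succ (x : ℝ) (n : ℕ) :
    rchoose x (n + 1) = rchoose x n * ((x - n) / (n + 1)) := by
  rw [rchoose, rchoose, Finset.prod_range_succ, div_mul_div_comm, Nat.factorial_succ]
  push_cast
  rw [mul_comm ((n:ℝ)+1)]

lemma choose_ratio (n m : ℕ) :
    ((n+1+m).choose m : ℝ) * (n+1) = ((n+m).choose m : ℝ) * (n+1+m) := by
  have f1 : ((n+1+m).factorial : ℝ) = (n+1+m) * (n+m).factorial := by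
    rw [show n+1+m = (n+m)+1 by ring, Nat.factorial_succ]; push_cast; ring
  have f2 : ((n+1).factorial : ℝ) = (n+1) * n.factorial := by
    rw [Nat.factorial_succ]; push_cast; ring
  rw [Nat.cast_choose ℝ (by omega : m ≤ n+1+m), Nat.cast_choose ℝ (by omega : m ≤ n+m),
    show n+1+m-m = n+1 by omega, show n+m-m = n by omega, f1, f2]
  have h2 : (n.factorial : ℝ) ≠ 0 := Nat.cast_ne_zero.2 n.factorial_ne_zero
  have h3 : (m.factorial : ℝ) ≠ 0 := Nat.cast_ne_zero.2 m.factorial_ne_zero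
  have h4 : ((n:ℝ) + 1) ≠ 0 := by positivity
  field_simp

lemma abs_rchoose_le {x : ℝ} {m : ℕ} (hx0 : 0 ≤ x) (hxm : x ≤ m) (n : ℕ) :
    |rchoose x n| ≤ ((n + m).choose m : ℝ) := by
  induction n with
  | zero => simp [rchoose_zero]
  | succ n ih =>
      rw [rchoose_succ, abs_mul]
      have h1 : |(x - n) / (n + 1)| ≤ ((n : ℝ) + m) / (n + 1) := by
        rw [abs_div, abs_of_pos (by positivity : (0:ℝ) < (n:ℝ)+1)]
        push_cast
        apply div_le_div_of_nonneg_right ?_ (by positivity) |>.trans_eq rfl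
        rw [abs_sub_le_iff]
        refine ⟨by linarith, ?_⟩
        have h5 : (0:ℝ) ≤ (m:ℝ) := by positivity
        have h6 : (0:ℝ) ≤ (n:ℝ) := by positivity
        linarith
      have hcnn : (0:ℝ) ≤ ((n + m).choose m : ℝ) := by positivity
      calc |rchoose x n| * |(x - n) / (n + 1)|
          ≤ ((n + m).choose m : ℝ) * (((n : ℝ) + m) / (n + 1)) :=
            mul_le_mul ih h1 (abs_nonneg _) hcnn
        _ ≤ ((n + 1 + m).choose m : ℝ) := by
            rw [mul_div_assoc' , div_le_iff₀ (by positivity : (0:ℝ) < (n:ℝ)+1)]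
            have := choose_ratio n m
            push_cast at this ⊢
            nlinarith [hcnn]


-- summability of (n+1)^K * ρ^n for 0 < ρ < 1
lemma aux_summable (K : ℕ) {ρ : ℝ} (h0 : 0 < ρ) (h1 : ρ < 1) :
    Summable (fun n : ℕ => ((n : ℝ) + 1) ^ K * ρ ^ n) := by
  have hn : ‖ρ‖ < 1 := by rw [Real.norm_eq_abs, abs_of_pos h0]; exact h1
  have h := summable_pow_mul_geometric_of_norm_lt_one (R := ℝ) K hn
  have h2 := (_root_.summable_nat_add_iff 1).2 h
  have h3 := h2.mul_right ρ⁻¹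
  refine h3.congr fun n => ?_
  push_cast
  rw [pow_succ]
  field_simp

lemma aux_summable' (K : ℕ) {ρ : ℝ} (h0 : 0 ≤ ρ) (h1 : ρ < 1) :
    Summable (fun n : ℕ => ((n : ℝ) + 1) ^ K * ρ ^ n) := by
  rcases eq_or_lt_of_le h0 with h | h
  · apply summable_of_ne_finset_zero (s := {0})
    intro n hn
    have : n ≠ 0 := by simpa using hn
    rw [← h, zero_pow this, mul_zero]
  · exact aux_summable K h h1

-- master summability
lemma master_summable {b : ℕ → ℝ} {B : ℝ} {K : ℕ}
    (hb : ∀ n, |b n| ≤ B * ((n : ℝ) + 1) ^ K) {x : ℝ} (hx : |x| < 1) :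
    Summable (fun n : ℕ => b n * x ^ n) := by
  refine Summable.of_norm_bounded (g := fun n => B * (((n:ℝ)+1) ^ K * |x| ^ n)) ?_ fun n => ?_
  · exact (aux_summable' K (abs_nonneg x) hx).mul_left B
  · rw [Real.norm_eq_abs, abs_mul, abs_pow]
    calc |b n| * |x| ^ n ≤ (B * ((n:ℝ)+1)^K) * |x| ^ n :=
          mul_le_mul_of_nonneg_right (hb n) (by positivity)
      _ = B * (((n:ℝ)+1)^K * |x| ^ n) := by ring

lemma B_nonneg {b : ℕ → ℝ} {B : ℝ} {K : ℕ}
    (hb : ∀ n, |b n| ≤ B * ((n : ℝ) + 1) ^ K) : 0 ≤ B := by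
  have := (abs_nonneg (b 0)).trans (hb 0)
  simpa using this

lemma shift_bound {b : ℕ → ℝ} {B : ℝ} {K : ℕ}
    (hb : ∀ n, |b n| ≤ B * ((n : ℝ) + 1) ^ K) :
    ∀ n : ℕ, |((n:ℝ)+1) * b (n+1)| ≤ (B * 2 ^ K) * ((n : ℝ) + 1) ^ (K+1) := by
  intro n
  have hB := B_nonneg hb
  have h1 : |((n:ℝ)+1) * b (n+1)| = ((n:ℝ)+1) * |b (n+1)| := by
    rw [abs_mul, abs_of_pos (by positivity : (0:ℝ) < (n:ℝ)+1)]
  rw [h1]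
  have h2 : |b (n+1)| ≤ B * ((n:ℝ)+2)^K := by
    have := hb (n+1); push_cast at this; convert this using 3; ring
  have h3 : ((n:ℝ)+2)^K ≤ 2^K * ((n:ℝ)+1)^K := by
    rw [← mul_pow]
    apply pow_le_pow_left₀ (by positivity)
    have : (0:ℝ) ≤ (n:ℝ) := by positivity
    linarith
  calc ((n:ℝ)+1) * |b (n+1)| ≤ ((n:ℝ)+1) * (B * (2^K * ((n:ℝ)+1)^K)) := by
        apply mul_le_mul_of_nonneg_left ?_ (by positivity)
        exact h2.trans (mul_le_mul_of_nonneg_left h3 hB)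
    _ = (B * 2 ^ K) * ((n : ℝ) + 1) ^ (K+1) := by ring

lemma master_hasDerivAt {b : ℕ → ℝ} {B : ℝ} {K : ℕ}
    (hb : ∀ n, |b n| ≤ B * ((n : ℝ) + 1) ^ K) {x : ℝ} (hx : |x| < 1) :
    HasDerivAt (fun y => ∑' n : ℕ, b n * y ^ n)
      (∑' n : ℕ, ((n:ℝ)+1) * b (n+1) * x ^ n) x := by
  have hB := B_nonneg hb
  set ρ : ℝ := (|x| + 1) / 2 with hρdef
  have hρ0 : 0 < ρ := by positivity
  have hρ1 : ρ < 1 := by rw [hρdef]; linarith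
  have hxρ : |x| < ρ := by rw [hρdef]; linarith
  set t : Set ℝ := Metric.ball 0 ρ with htdef
  have hxt : x ∈ t := by simpa [htdef, Real.dist_eq] using hxρ
  set u : ℕ → ℝ := fun n => (B / ρ) * (((n:ℝ)+1) ^ (K+1) * ρ ^ n) with hudef
  have hu : Summable u := (aux_summable (K+1) hρ0 hρ1).mul_left _
  have hbd : ∀ (n : ℕ) (y : ℝ), y ∈ t → ‖b n * ((n:ℝ) * y ^ (n-1))‖ ≤ u n := by
    intro n y hy
    have hyρ : |y| ≤ ρ := by
      have : dist y 0 < ρ := hy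
      rw [Real.dist_eq, sub_zero] at this; linarith
    rw [Real.norm_eq_abs, abs_mul, abs_mul, abs_pow, Nat.abs_cast]
    rcases Nat.eq_zero_or_pos n with h0 | hpos
    · subst h0; simp [hudef]; positivity
    · have h1 : |b n| * ((n:ℝ) * |y| ^ (n-1)) ≤ (B * ((n:ℝ)+1)^K) * (((n:ℝ)+1) * ρ ^ (n-1)) := by
        apply mul_le_mul (hb n) ?_ (by positivity) (by positivity)
        apply mul_le_mul (by linarith [Nat.cast_nonneg (α := ℝ) n]) ?_ (by positivity)
          (by positivity)
        exact pow_le_pow_left₀ (abs_nonneg y) hyρ _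
      have h2 : ρ ^ (n - 1) = ρ ^ n / ρ := by
        rw [eq_div_iff (ne_of_gt hρ0), ← pow_succ]
        congr 1
        omega
      calc |b n| * ((n:ℝ) * |y| ^ (n-1)) ≤ (B * ((n:ℝ)+1)^K) * (((n:ℝ)+1) * ρ ^ (n-1)) := h1
        _ = u n := by rw [h2, hudef]; field_simp; ring
  have hder := hasDerivAt_tsum_of_isPreconnected hu Metric.isOpen_ball
    (convex_ball (0:ℝ) ρ).isPreconnected
    (fun n y _ => (hasDerivAt_pow n y).const_mul (b n)) hbd hxt
    (master_summable hb hx) hxt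
  have hsum : Summable fun n : ℕ => b n * ((n:ℝ) * x ^ (n-1)) :=
    Summable.of_norm_bounded hu (fun n => hbd n x hxt)
  have hrw : (∑' n : ℕ, b n * ((n:ℝ) * x ^ (n-1)))
      = ∑' n : ℕ, ((n:ℝ)+1) * b (n+1) * x ^ n := by
    rw [Summable.tsum_eq_zero_add hsum]
    push_cast
    simp only [Nat.cast_zero, zero_mul, mul_zero, zero_add, Nat.add_sub_cancel]
    exact tsum_congr fun n => by push_cast; ring
  rw [← hrw]
  exact hder

def Ecoeff (ν : ℝ) (ℓ : ℕ) : ℝ := (-1 : ℝ) ^ ℓ * rchoose (ν - 1) ℓ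

def Cconst (μ : ℕ) (ν : ℝ) : ℝ := (∏ j ∈ Finset.range (μ+1), (ν + j)) / (μ.factorial : ℝ)

lemma prod_desc (μ ℓ : ℕ) :
    ∏ i ∈ Finset.range μ, ((μ:ℝ) + ℓ - i) = ((μ+ℓ).factorial : ℝ) / (ℓ.factorial : ℝ) := by
  induction μ with
  | zero =>
      have h4 : (ℓ.factorial : ℝ) ≠ 0 := Nat.cast_ne_zero.2 ℓ.factorial_ne_zero
      simp [div_self h4]
  | succ μ ih =>
      rw [Finset.prod_range_succ']
      have h1 : ∀ i ∈ Finset.range μ, (((μ+1:ℕ):ℝ) + ℓ - ((i+1:ℕ):ℝ)) = ((μ:ℝ) + ℓ - i) := by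
        intro i _; push_cast; ring
      rw [Finset.prod_congr rfl h1, ih]
      have h2 : (((μ+1:ℕ):ℝ) + ℓ - ((0:ℕ):ℝ)) = ((μ:ℝ) + ℓ + 1) := by push_cast; ring
      rw [h2]
      have h3 : ((μ+1+ℓ).factorial : ℝ) = ((μ:ℝ)+ℓ+1) * ((μ+ℓ).factorial : ℝ) := by
        rw [show μ+1+ℓ = (μ+ℓ)+1 by ring, Nat.factorial_succ]; push_cast; ring
      rw [h3]
      have h4 : (ℓ.factorial : ℝ) ≠ 0 := Nat.cast_ne_zero.2 ℓ.factorial_ne_zero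
      field_simp

lemma rchoose_nat (μ ℓ : ℕ) : rchoose ((μ:ℝ) + ℓ) μ = ((μ+ℓ).choose μ : ℝ) := by
  rw [rchoose]
  have h1 : ∀ i ∈ Finset.range μ, ((μ:ℝ) + ℓ - i) = ((μ:ℝ) + ℓ - i) := fun _ _ => rfl
  rw [show (∏ i ∈ Finset.range μ, ((μ:ℝ) + (ℓ:ℝ) - (i:ℝ))) = ((μ+ℓ).factorial : ℝ) / (ℓ.factorial : ℝ) from prod_desc μ ℓ]
  rw [Nat.cast_choose ℝ (by omega : μ ≤ μ + ℓ), show μ+ℓ-μ = ℓ by omega, div_div]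
  rw [mul_comm (ℓ.factorial : ℝ)]

lemma first_factor (μ : ℕ) (ν : ℝ) :
    ∏ i ∈ Finset.range (μ+1), (ν + μ - i) = ∏ j ∈ Finset.range (μ+1), (ν + j) := by
  rw [← Finset.prod_range_reflect (fun j => ν + j) (μ+1)]
  apply Finset.prod_congr rfl
  intro i hi
  have hi' : i ≤ μ := by simpa [Nat.lt_succ_iff] using hi
  have : ((μ + 1 - 1 - i : ℕ) : ℝ) = (μ:ℝ) - i := by
    rw [show μ+1-1-i = μ - i by omega, Nat.cast_sub hi']
  rw [this]
  ring

lemma key_split (μ ℓ : ℕ) (ν : ℝ) :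
    ∏ i ∈ Finset.range (μ+ℓ+1), (ν + μ - i)
      = (∏ j ∈ Finset.range (μ+1), (ν + j)) * ∏ i ∈ Finset.range ℓ, (ν - 1 - i) := by
  rw [show μ+ℓ+1 = (μ+1)+ℓ by ring, Finset.prod_range_add, first_factor]
  congr 1
  apply Finset.prod_congr rfl
  intro i _
  push_cast
  ring

lemma Fcoeff_eq (μ : ℕ) (ν : ℝ) (ℓ : ℕ) :
    ((μ:ℝ) + ℓ + 1) * Fcoeff μ ν ℓ = Cconst μ ν * Ecoeff ν ℓ := by
  rw [Fcoeff, Cconst, Ecoeff, rchoose_nat, rchoose, rchoose, key_split]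
  rw [Nat.cast_choose ℝ (by omega : μ ≤ μ + ℓ), show μ+ℓ-μ = ℓ by omega]
  have h3 : ((μ+ℓ+1).factorial : ℝ) = ((μ:ℝ)+ℓ+1) * ((μ+ℓ).factorial : ℝ) := by
    rw [Nat.factorial_succ]; push_cast; ring
  rw [h3]
  have h4 : (ℓ.factorial : ℝ) ≠ 0 := Nat.cast_ne_zero.2 ℓ.factorial_ne_zero
  have h5 : (μ.factorial : ℝ) ≠ 0 := Nat.cast_ne_zero.2 μ.factorial_ne_zero
  have h6 : ((μ+ℓ).factorial : ℝ) ≠ 0 := Nat.cast_ne_zero.2 (μ+ℓ).factorial_ne_zero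
  have h7 : ((μ:ℝ)+ℓ+1) ≠ 0 := by positivity
  field_simp

lemma Ecoeff_rec (ν : ℝ) (ℓ : ℕ) :
    ((ℓ:ℝ)+1) * Ecoeff ν (ℓ+1) = ((ℓ:ℝ) - (ν-1)) * Ecoeff ν ℓ := by
  rw [Ecoeff, Ecoeff, rchoose_succ, pow_succ]
  have h7 : ((ℓ:ℝ)+1) ≠ 0 := by positivity
  field_simp
  ring

lemma rchoose_mul_succ (x : ℝ) (j : ℕ) :
    rchoose x j * (x - j) = rchoose x (j+1) * ((j:ℝ)+1) := by
  rw [rchoose_succ]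
  have h7 : ((j:ℝ)+1) ≠ 0 := by positivity
  field_simp

lemma Cconst_eq (μ : ℕ) (ν : ℝ) : Cconst μ ν = rchoose (ν + μ) (μ+1) * ((μ:ℝ)+1) := by
  rw [Cconst, rchoose, first_factor]
  have h1 : ((μ+1).factorial : ℝ) = ((μ:ℝ)+1) * (μ.factorial : ℝ) := by
    rw [Nat.factorial_succ]; push_cast; ring
  rw [h1]
  have h5 : (μ.factorial : ℝ) ≠ 0 := Nat.cast_ne_zero.2 μ.factorial_ne_zero
  have h7 : ((μ:ℝ)+1) ≠ 0 := by positivity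
  field_simp

end Aux

namespace Aux

def tval (t : ℝ × ℝ × ℤ) (x : ℝ) : ℝ := t.1 * (1 - x) ^ t.2.1 * x ^ t.2.2

def tripSum (L : List (ℝ × ℝ × ℤ)) (x : ℝ) : ℝ := (L.map (fun t => tval t x)).sum

def tripStep : List (ℝ × ℝ × ℤ) → List (ℝ × ℝ × ℤ)
  | [] => []
  | t :: L => (-t.1 * t.2.1, t.2.1 - 1, t.2.2) :: (t.1 * (t.2.2 : ℝ), t.2.1, t.2.2 - 1) :: tripStep L

lemma tripSum_nil (x : ℝ) : tripSum [] x = 0 := rfl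

lemma tripSum_cons (t : ℝ × ℝ × ℤ) (L : List (ℝ × ℝ × ℤ)) (x : ℝ) :
    tripSum (t :: L) x = tval t x + tripSum L x := by
  simp [tripSum]

lemma tripSum_append (L M : List (ℝ × ℝ × ℤ)) (x : ℝ) :
    tripSum (L ++ M) x = tripSum L x + tripSum M x := by
  simp [tripSum]

lemma tripStep_append (L M : List (ℝ × ℝ × ℤ)) :
    tripStep (L ++ M) = tripStep L ++ tripStep M := by
  induction L with
  | nil => rfl
  | cons t L ih => simp [tripStep, ih]

lemma tval_hasDerivAt (t : ℝ × ℝ × ℤ) {x : ℝ} (hx : x ∈ Set.Ioo (0:ℝ) 1) :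
    HasDerivAt (tval t)
      (tval (-t.1 * t.2.1, t.2.1 - 1, t.2.2) x + tval (t.1 * (t.2.2 : ℝ), t.2.1, t.2.2 - 1) x) x := by
  obtain ⟨c, p, q⟩ := t
  have hx0 : x ≠ 0 := ne_of_gt hx.1
  have h1x : (1:ℝ) - x ≠ 0 := by have := hx.2; intro h; linarith [sub_eq_zero.mp h]
  have hrpow : HasDerivAt (fun y : ℝ => (1 - y) ^ p) (-(p * (1-x) ^ (p-1))) x := by
    have hbase : HasDerivAt (fun y : ℝ => 1 - y) (-1) x := by
      simpa using (hasDerivAt_id x).const_sub 1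
    have houter : HasDerivAt (fun z : ℝ => z ^ p) (p * (1-x) ^ (p-1)) (1 - x) :=
      Real.hasDerivAt_rpow_const (Or.inl h1x)
    have := houter.comp x hbase
    exact this.congr_deriv (by ring)
  have hzpow : HasDerivAt (fun y : ℝ => y ^ q) ((q:ℝ) * x ^ (q-1)) x :=
    hasDerivAt_zpow q x (Or.inl hx0)
  have := ((hrpow.const_mul c).mul hzpow)
  refine this.congr_deriv (Eq.symm ?_)
  simp only [tval]
  ring
lemma tripSum_hasDerivAt (L : List (ℝ × ℝ × ℤ)) {x : ℝ} (hx : x ∈ Set.Ioo (0:ℝ) 1) :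
    HasDerivAt (tripSum L) (tripSum (tripStep L) x) x := by
  induction L with
  | nil =>
      simp only [tripStep, tripSum_nil]
      exact (hasDerivAt_const x (0:ℝ)).congr_deriv rfl
  | cons t L ih =>
      have h := (tval_hasDerivAt t hx).add ih
      have : tripSum (t :: L) = fun y => tval t y + tripSum L y := by
        funext y; rw [tripSum_cons]
      rw [this, tripStep]
      rw [tripSum_cons, tripSum_cons]
      refine h.congr_deriv (Eq.symm ?_)
      ring

lemma iteratedDeriv_eq_tripSum (f : ℝ → ℝ) (L : List (ℝ × ℝ × ℤ))
    (hf : ∀ x ∈ Set.Ioo (0:ℝ) 1, f x = tripSum L x) (r : ℕ) :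
    ∀ x ∈ Set.Ioo (0:ℝ) 1, iteratedDeriv r f x = tripSum (tripStep^[r] L) x := by
  induction r generalizing L with
  | zero => simpa using hf
  | succ r ih =>
      intro x hx
      rw [iteratedDeriv_succ]
      have hev : iteratedDeriv r f =ᶠ[nhds x] tripSum (tripStep^[r] L) :=
        Filter.eventuallyEq_of_mem (isOpen_Ioo.mem_nhds hx) (ih L hf)
      rw [hev.deriv_eq, (tripSum_hasDerivAt _ hx).deriv]
      rw [Function.iterate_succ_apply']

lemma tendsto_tripSum_zero (L : List (ℝ × ℝ × ℤ))
    (hL : ∀ t ∈ L, t.1 = 0 ∨ 0 < t.2.1) :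
    Tendsto (tripSum L) (nhdsWithin 1 (Set.Iio (1:ℝ))) (nhds 0) := by
  induction L with
  | nil => exact (tendsto_const_nhds (x := (0:ℝ))).congr (fun x => (tripSum_nil x).symm)
  | cons t L ih =>
      have hrest := ih fun s hs => hL s (List.mem_cons_of_mem _ hs)
      have hhead : Tendsto (fun x => tval t x) (nhdsWithin 1 (Set.Iio (1:ℝ))) (nhds 0) := by
        rcases hL t (List.mem_cons_self) with hc | hp
        · obtain ⟨c, p, q⟩ := t
          simp only at hc
          subst hc
          simpa [tval] using tendsto_const_nhds
        · obtain ⟨c, p, q⟩ := t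
          simp only at hp
          have h1 : Tendsto (fun x : ℝ => 1 - x) (nhdsWithin 1 (Set.Iio (1:ℝ))) (nhds 0) := by
            have hc1 : Continuous (fun x : ℝ => 1 - x) := continuous_const.sub continuous_id
            have hc2 := (hc1.tendsto (1:ℝ)).mono_left (nhdsWithin_le_nhds (s := Set.Iio (1:ℝ)))
            simpa using hc2
          have h2 : Tendsto (fun x : ℝ => (1 - x) ^ p) (nhdsWithin 1 (Set.Iio (1:ℝ))) (nhds 0) := by
            have hcont : ContinuousAt (fun z : ℝ => z ^ p) 0 :=
              Real.continuousAt_rpow_const 0 p (Or.inr (le_of_lt hp))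
            have := hcont.tendsto.comp h1
            rwa [Real.zero_rpow (ne_of_gt hp)] at this
          have h3 : Tendsto (fun x : ℝ => x ^ q) (nhdsWithin 1 (Set.Iio (1:ℝ))) (nhds 1) := by
            have hcont : ContinuousAt (fun x : ℝ => x ^ q) 1 :=
              continuousAt_zpow₀ (1:ℝ) q (Or.inl one_ne_zero)
            have := hcont.tendsto.mono_left (nhdsWithin_le_nhds (s := Set.Iio (1:ℝ)))
            rwa [one_zpow] at this
          have := ((tendsto_const_nhds (x := c)).mul h2).mul h3
          simpa [tval] using this
      have := hhead.add hrest
      simp only [add_zero] at this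
      refine Tendsto.congr (fun x => (tripSum_cons t L x).symm) this

lemma tripStep_invariant (ν : ℝ) (k : ℕ) (L : List (ℝ × ℝ × ℤ))
    (hL : ∀ t ∈ L, t.1 = 0 ∨ ν - k ≤ t.2.1) :
    ∀ t ∈ tripStep L, t.1 = 0 ∨ ν - (k+1) ≤ t.2.1 := by
  induction L with
  | nil => simp [tripStep]
  | cons t L ih =>
      intro s hs
      rw [tripStep, List.mem_cons, List.mem_cons] at hs
      rcases hs with hs | hs | hs
      · rcases hL t (List.mem_cons_self) with hc | hp
        · left; rw [hs]; simp [hc]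
        · right; rw [hs]; simp only; linarith
      · rcases hL t (List.mem_cons_self) with hc | hp
        · left; rw [hs]; simp [hc]
        · right; rw [hs]; simp only; linarith
      · exact ih (fun s hs => hL s (List.mem_cons_of_mem _ hs)) s hs

lemma tripStep_iterate_invariant (ν : ℝ) (r : ℕ) (L : List (ℝ × ℝ × ℤ))
    (hL : ∀ t ∈ L, t.1 = 0 ∨ ν ≤ t.2.1) :
    ∀ t ∈ tripStep^[r] L, t.1 = 0 ∨ ν - r ≤ t.2.1 := by
  induction r generalizing L with
  | zero => simpa using hL
  | succ r ih =>
      rw [Function.iterate_succ_apply']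
      have h0 : ∀ t ∈ L, t.1 = 0 ∨ ν - 0 ≤ t.2.1 := by simpa using hL
      have := tripStep_invariant ν r (tripStep^[r] L) (ih L hL)
      intro t ht
      rcases this t ht with h | h
      · exact Or.inl h
      · right; push_cast at h ⊢; linarith

end Aux

namespace Aux

lemma Fcoeff_bound (μ : ℕ) {ν : ℝ} (hν : 1 ≤ ν) :
    ∃ (B : ℝ) (K : ℕ), ∀ ℓ, |Fcoeff μ ν ℓ| ≤ B * ((ℓ:ℝ)+1) ^ K := by
  set m : ℕ := ⌈ν⌉₊ + μ with hm
  refine ⟨((μ:ℝ)+m+2)^m * ((μ:ℝ)+1)^μ, m + μ, fun ℓ => ?_⟩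
  have hν0 : (0:ℝ) ≤ ν := by linarith
  have h1 : |rchoose (ν + μ) (μ+ℓ+1)| ≤ (((μ+ℓ+1) + m).choose m : ℝ) := by
    apply abs_rchoose_le (by positivity)
    push_cast [hm]
    have := Nat.le_ceil ν
    linarith
  have h2 : (((μ+ℓ+1) + m).choose m : ℝ) ≤ (((μ:ℝ)+m+2) * ((ℓ:ℝ)+1)) ^ m := by
    calc (((μ+ℓ+1) + m).choose m : ℝ) ≤ ((((μ+ℓ+1) + m) ^ m : ℕ) : ℝ) := by
          exact_mod_cast Nat.choose_le_pow _ _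
      _ ≤ (((μ:ℝ)+m+2) * ((ℓ:ℝ)+1)) ^ m := by
          rw [Nat.cast_pow]
          apply pow_le_pow_left₀ (by positivity)
          push_cast
          nlinarith [Nat.cast_nonneg (α := ℝ) ℓ, Nat.cast_nonneg (α := ℝ) μ,
            Nat.cast_nonneg (α := ℝ) m]
  have h3 : |rchoose ((μ:ℝ) + ℓ) μ| ≤ (((μ:ℝ)+1) * ((ℓ:ℝ)+1)) ^ μ := by
    rw [rchoose_nat]
    rw [abs_of_nonneg (by positivity)]
    calc (((μ+ℓ).choose μ : ℕ) : ℝ) ≤ (((μ+ℓ) ^ μ : ℕ) : ℝ) := by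
          exact_mod_cast Nat.choose_le_pow _ _
      _ ≤ (((μ:ℝ)+1) * ((ℓ:ℝ)+1)) ^ μ := by
          rw [Nat.cast_pow]
          apply pow_le_pow_left₀ (by positivity)
          push_cast
          nlinarith [Nat.cast_nonneg (α := ℝ) ℓ, Nat.cast_nonneg (α := ℝ) μ]
  have := mul_le_mul (h1.trans h2) h3 (abs_nonneg _) (by positivity)
  rw [Fcoeff, abs_mul, abs_mul, abs_pow, abs_neg, abs_one, one_pow, one_mul]
  calc |rchoose (ν + μ) (μ+ℓ+1)| * |rchoose ((μ:ℝ) + ℓ) μ|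
      ≤ (((μ:ℝ)+m+2) * ((ℓ:ℝ)+1)) ^ m * ((((μ:ℝ)+1) * ((ℓ:ℝ)+1)) ^ μ) := this
    _ = ((μ:ℝ)+m+2)^m * ((μ:ℝ)+1)^μ * ((ℓ:ℝ)+1) ^ (m + μ) := by
        rw [mul_pow, mul_pow, pow_add]; ring

lemma Ecoeff_bound {ν : ℝ} (hν : 1 ≤ ν) :
    ∃ (B : ℝ) (K : ℕ), ∀ ℓ, |Ecoeff ν ℓ| ≤ B * ((ℓ:ℝ)+1) ^ K := by
  set m : ℕ := ⌈ν⌉₊ with hm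
  refine ⟨((m:ℝ)+1)^m, m, fun ℓ => ?_⟩
  have h1 : |rchoose (ν - 1) ℓ| ≤ ((ℓ + m).choose m : ℝ) := by
    apply abs_rchoose_le (by linarith)
    have := Nat.le_ceil ν
    rw [hm]
    linarith
  have h2 : ((ℓ + m).choose m : ℝ) ≤ (((m:ℝ)+1) * ((ℓ:ℝ)+1)) ^ m := by
    calc ((ℓ + m).choose m : ℝ) ≤ (((ℓ + m) ^ m : ℕ) : ℝ) := by
          exact_mod_cast Nat.choose_le_pow _ _
      _ ≤ (((m:ℝ)+1) * ((ℓ:ℝ)+1)) ^ m := by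
          rw [Nat.cast_pow]
          apply pow_le_pow_left₀ (by positivity)
          push_cast
          nlinarith [Nat.cast_nonneg (α := ℝ) ℓ, Nat.cast_nonneg (α := ℝ) m]
  rw [Ecoeff, abs_mul, abs_pow, abs_neg, abs_one, one_pow, one_mul]
  calc |rchoose (ν - 1) ℓ| ≤ (((m:ℝ)+1) * ((ℓ:ℝ)+1)) ^ m := h1.trans h2
    _ = ((m:ℝ)+1)^m * ((ℓ:ℝ)+1) ^ m := by rw [mul_pow]

end Aux

namespace Aux

def Esum (ν : ℝ) (x : ℝ) : ℝ := ∑' ℓ : ℕ, Ecoeff ν ℓ * x ^ ℓ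

section Eseries

variable {ν : ℝ} (hν : 1 ≤ ν)

include hν

lemma Esum_summable {x : ℝ} (hx : |x| < 1) : Summable fun ℓ : ℕ => Ecoeff ν ℓ * x ^ ℓ := by
  obtain ⟨B, K, hb⟩ := Ecoeff_bound hν
  exact master_summable hb hx

lemma Esum_summable_shift {x : ℝ} (hx : |x| < 1) :
    Summable fun ℓ : ℕ => ((ℓ:ℝ)+1) * Ecoeff ν (ℓ+1) * x ^ ℓ := by
  obtain ⟨B, K, hb⟩ := Ecoeff_bound hν
  exact master_summable (shift_bound hb) hx

lemma Esum_summable_mul {x : ℝ} (hx : |x| < 1) :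
    Summable fun ℓ : ℕ => (ℓ:ℝ) * Ecoeff ν ℓ * x ^ ℓ := by
  obtain ⟨B, K, hb⟩ := Ecoeff_bound hν
  have hb' : ∀ n : ℕ, |(n:ℝ) * Ecoeff ν n| ≤ B * ((n:ℝ)+1) ^ (K+1) := by
    intro n
    rw [abs_mul, Nat.abs_cast, pow_succ]
    calc (n:ℝ) * |Ecoeff ν n| ≤ ((n:ℝ)+1) * (B * ((n:ℝ)+1) ^ K) := by
          apply mul_le_mul (by linarith [Nat.cast_nonneg (α := ℝ) n]) (hb n) (abs_nonneg _)
            (by positivity)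
      _ = B * (((n:ℝ)+1) ^ K * ((n:ℝ)+1)) := by ring
  exact master_summable hb' hx

lemma Esum_hasDerivAt {x : ℝ} (hx : |x| < 1) :
    HasDerivAt (Esum ν) (∑' ℓ : ℕ, ((ℓ:ℝ)+1) * Ecoeff ν (ℓ+1) * x ^ ℓ) x := by
  obtain ⟨B, K, hb⟩ := Ecoeff_bound hν
  exact master_hasDerivAt hb hx

lemma Esum_ODE {x : ℝ} (hx : |x| < 1) :
    (1 - x) * (∑' ℓ : ℕ, ((ℓ:ℝ)+1) * Ecoeff ν (ℓ+1) * x ^ ℓ) + (ν - 1) * Esum ν x = 0 := by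
  have hS1 := Esum_summable hν hx
  have hS2 := Esum_summable_shift hν hx
  have hS3 := Esum_summable_mul hν hx
  have hshift : x * (∑' ℓ : ℕ, ((ℓ:ℝ)+1) * Ecoeff ν (ℓ+1) * x ^ ℓ)
      = ∑' ℓ : ℕ, (ℓ:ℝ) * Ecoeff ν ℓ * x ^ ℓ := by
    rw [← tsum_mul_left, Summable.tsum_eq_zero_add hS3]
    simp only [Nat.cast_zero, zero_mul, zero_add]
    exact (tsum_congr fun ℓ => by push_cast; ring).symm
  have hE : (1 - x) * (∑' ℓ : ℕ, ((ℓ:ℝ)+1) * Ecoeff ν (ℓ+1) * x ^ ℓ)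
      = (∑' ℓ : ℕ, ((ℓ:ℝ)+1) * Ecoeff ν (ℓ+1) * x ^ ℓ)
        - ∑' ℓ : ℕ, (ℓ:ℝ) * Ecoeff ν ℓ * x ^ ℓ := by
    rw [sub_mul, one_mul, hshift]
  rw [hE, Esum, ← tsum_mul_left]
  rw [← Summable.tsum_sub hS2 hS3]
  have hsum : Summable fun ℓ : ℕ => ((ℓ:ℝ)+1) * Ecoeff ν (ℓ+1) * x ^ ℓ - (ℓ:ℝ) * Ecoeff ν ℓ * x ^ ℓ :=
    hS2.sub hS3
  rw [← Summable.tsum_add hsum (hS1.mul_left _)]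
  rw [show (0:ℝ) = ∑' _ : ℕ, (0:ℝ) by rw [tsum_zero]]
  apply tsum_congr
  intro ℓ
  have := Ecoeff_rec ν ℓ
  have expand : ((ℓ:ℝ)+1) * Ecoeff ν (ℓ+1) * x ^ ℓ - (ℓ:ℝ) * Ecoeff ν ℓ * x ^ ℓ
      + (ν - 1) * (Ecoeff ν ℓ * x ^ ℓ)
      = (((ℓ:ℝ)+1) * Ecoeff ν (ℓ+1) - ((ℓ:ℝ) - (ν-1)) * Ecoeff ν ℓ) * x ^ ℓ := by ring
  rw [expand, this, sub_self, zero_mul]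

lemma Esum_eq {x : ℝ} (hx : x ∈ Set.Ioo (-1:ℝ) 1) : Esum ν x = (1 - x) ^ (ν - 1) := by
  set W : ℝ → ℝ := fun y => Esum ν y * (1 - y) ^ (1 - ν) with hW
  have key : ∀ y ∈ Set.Ioo (-1:ℝ) 1, HasDerivAt W 0 y := by
    intro y hy
    have hy1 : (0:ℝ) < 1 - y := by linarith [hy.2]
    have hyabs : |y| < 1 := abs_lt.2 ⟨hy.1, hy.2⟩
    have h1 : HasDerivAt (fun z : ℝ => (1 - z) ^ (1 - ν)) ((ν - 1) * (1-y) ^ (-ν)) y := by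
      have hbase : HasDerivAt (fun z : ℝ => 1 - z) (-1) y := by
        simpa using (hasDerivAt_id y).const_sub 1
      have houter : HasDerivAt (fun z : ℝ => z ^ (1-ν)) ((1-ν) * (1-y) ^ (1-ν-1)) (1 - y) :=
        Real.hasDerivAt_rpow_const (Or.inl (ne_of_gt hy1))
      have := houter.comp y hbase
      simp only [mul_neg_one] at this
      refine this.congr_deriv (Eq.symm ?_)
      rw [show 1-ν-1 = -ν by ring]
      ring
    have h2 := (Esum_hasDerivAt hν hyabs).mul h1
    refine h2.congr_deriv (Eq.symm ?_)
    have hsplit : (1 - y) ^ (1 - ν) = (1 - y) * (1 - y) ^ (-ν) := by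
      rw [show (1:ℝ) - ν = 1 + (-ν) by ring, Real.rpow_add hy1, Real.rpow_one]
    have hODE := Esum_ODE hν hyabs
    rw [hsplit]
    linear_combination (-((1 - y) ^ (-ν))) * hODE
  have hconst : ∀ y ∈ Set.Ioo (-1:ℝ) 1, W y = W 0 := by
    intro y hy
    apply (convex_Ioo (-1:ℝ) 1).is_const_of_fderivWithin_eq_zero
      (fun z hz => ((key z hz).differentiableAt).differentiableWithinAt) ?_ hy
      (by constructor <;> norm_num)
    intro z hz
    rw [fderivWithin_of_isOpen isOpen_Ioo hz]
    have := (key z hz).hasFDerivAt.fderiv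
    rw [this]
    ext v
    simp
  have hW0 : W 0 = 1 := by
    rw [hW]
    simp only [sub_zero, Real.one_rpow, mul_one]
    rw [Esum]
    rw [tsum_eq_single 0 (fun n hn => by rw [zero_pow hn, mul_zero])]
    simp [Ecoeff, rchoose_zero]
  have := hconst x hx
  rw [hW0, hW] at this
  have this2 : Esum ν x * (1 - x) ^ (1 - ν) = 1 := this
  have hx1 : (0:ℝ) < 1 - x := by linarith [hx.2]
  have hmul : (1 - x) ^ (1 - ν) * (1 - x) ^ (ν - 1) = 1 := by
    rw [← Real.rpow_add hx1, show (1:ℝ) - ν + (ν - 1) = 0 by ring, Real.rpow_zero]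
  calc Esum ν x = Esum ν x * ((1 - x) ^ (1 - ν) * (1 - x) ^ (ν - 1)) := by rw [hmul, mul_one]
    _ = (Esum ν x * (1 - x) ^ (1 - ν)) * (1 - x) ^ (ν - 1) := by ring
    _ = 1 * (1 - x) ^ (ν - 1) := by rw [this2]
    _ = (1 - x) ^ (ν - 1) := one_mul _

end Eseries

end Aux

namespace Aux

section Fser

variable {μ : ℕ} {ν : ℝ} (hν : 1 ≤ ν)

include hν

lemma Fsum_summable {x : ℝ} (hx : |x| < 1) : Summable fun ℓ : ℕ => Fcoeff μ ν ℓ * x ^ ℓ := by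
  obtain ⟨B, K, hb⟩ := Fcoeff_bound μ hν
  exact master_summable hb hx

lemma Fsum_summable_shift {x : ℝ} (hx : |x| < 1) :
    Summable fun ℓ : ℕ => ((ℓ:ℝ)+1) * Fcoeff μ ν (ℓ+1) * x ^ ℓ := by
  obtain ⟨B, K, hb⟩ := Fcoeff_bound μ hν
  exact master_summable (shift_bound hb) hx

lemma Fsum_summable_mul {x : ℝ} (hx : |x| < 1) :
    Summable fun ℓ : ℕ => (ℓ:ℝ) * Fcoeff μ ν ℓ * x ^ ℓ := by
  obtain ⟨B, K, hb⟩ := Fcoeff_bound μ hν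
  have hb' : ∀ n : ℕ, |(n:ℝ) * Fcoeff μ ν n| ≤ B * ((n:ℝ)+1) ^ (K+1) := by
    intro n
    rw [abs_mul, Nat.abs_cast, pow_succ]
    calc (n:ℝ) * |Fcoeff μ ν n| ≤ ((n:ℝ)+1) * (B * ((n:ℝ)+1) ^ K) := by
          apply mul_le_mul (by linarith [Nat.cast_nonneg (α := ℝ) n]) (hb n) (abs_nonneg _)
            (by positivity)
      _ = B * (((n:ℝ)+1) ^ K * ((n:ℝ)+1)) := by ring
  exact master_summable hb' hx

lemma Fsum_hasDerivAt {x : ℝ} (hx : |x| < 1) :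
    HasDerivAt (Fseries μ ν) (∑' ℓ : ℕ, ((ℓ:ℝ)+1) * Fcoeff μ ν (ℓ+1) * x ^ ℓ) x := by
  obtain ⟨B, K, hb⟩ := Fcoeff_bound μ hν
  exact master_hasDerivAt hb hx

lemma Fsum_ident {x : ℝ} (hx : |x| < 1) :
    ((μ:ℝ)+1) * Fseries μ ν x + x * (∑' ℓ : ℕ, ((ℓ:ℝ)+1) * Fcoeff μ ν (ℓ+1) * x ^ ℓ)
      = Cconst μ ν * Esum ν x := by
  have hS1 := Fsum_summable (μ := μ) hν hx
  have hS2 := Fsum_summable_shift (μ := μ) hν hx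
  have hS3 := Fsum_summable_mul (μ := μ) hν hx
  have hshift : x * (∑' ℓ : ℕ, ((ℓ:ℝ)+1) * Fcoeff μ ν (ℓ+1) * x ^ ℓ)
      = ∑' ℓ : ℕ, (ℓ:ℝ) * Fcoeff μ ν ℓ * x ^ ℓ := by
    rw [← tsum_mul_left, Summable.tsum_eq_zero_add hS3]
    simp only [Nat.cast_zero, zero_mul, zero_add]
    exact (tsum_congr fun ℓ => by push_cast; ring).symm
  rw [hshift, Fseries, ← tsum_mul_left]
  rw [← Summable.tsum_add (hS1.mul_left _) hS3]
  rw [Esum, ← tsum_mul_left]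
  apply tsum_congr
  intro ℓ
  have := Fcoeff_eq μ ν ℓ
  calc ((μ:ℝ)+1) * (Fcoeff μ ν ℓ * x ^ ℓ) + (ℓ:ℝ) * Fcoeff μ ν ℓ * x ^ ℓ
      = (((μ:ℝ) + ℓ + 1) * Fcoeff μ ν ℓ) * x ^ ℓ := by ring
    _ = (Cconst μ ν * Ecoeff ν ℓ) * x ^ ℓ := by rw [this]
    _ = Cconst μ ν * (Ecoeff ν ℓ * x ^ ℓ) := by ring

lemma Hconst {x : ℝ} (hx : x ∈ Set.Ioo (-1:ℝ) 1) :
    x ^ (μ+1) * Fseries μ ν x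
      + ∑ j ∈ Finset.range (μ+1), rchoose (ν + μ) j * (1-x) ^ (ν + μ - j) * x ^ j = 1 := by
  set H : ℝ → ℝ := fun y => y ^ (μ+1) * Fseries μ ν y
      + ∑ j ∈ Finset.range (μ+1), rchoose (ν + μ) j * (1-y) ^ (ν + μ - j) * y ^ j with hH
  have key : ∀ y ∈ Set.Ioo (-1:ℝ) 1, HasDerivAt H 0 y := by
    intro y hy
    have hy1 : (0:ℝ) < 1 - y := by linarith [hy.2]
    have hyabs : |y| < 1 := abs_lt.2 ⟨hy.1, hy.2⟩
    -- part A
    have hA : HasDerivAt (fun z : ℝ => z ^ (μ+1) * Fseries μ ν z)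
        (y ^ μ * (Cconst μ ν * Esum ν y)) y := by
      have h1 := (hasDerivAt_pow (μ+1) y).mul (Fsum_hasDerivAt (μ := μ) hν hyabs)
      refine h1.congr_deriv (Eq.symm ?_)
      have hident := Fsum_ident (μ := μ) hν hyabs
      simp only [Nat.add_sub_cancel, Nat.cast_add, Nat.cast_one]
      calc y ^ μ * (Cconst μ ν * Esum ν y)
          = y ^ μ * (((μ:ℝ)+1) * Fseries μ ν y
              + y * (∑' ℓ : ℕ, ((ℓ:ℝ)+1) * Fcoeff μ ν (ℓ+1) * y ^ ℓ)) := by rw [hident]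
        _ = ((μ:ℝ)+1) * y ^ μ * Fseries μ ν y
              + y ^ (μ+1) * (∑' ℓ : ℕ, ((ℓ:ℝ)+1) * Fcoeff μ ν (ℓ+1) * y ^ ℓ) := by
            rw [pow_succ]; ring
    -- part B
    set v : ℕ → ℝ := fun j => rchoose (ν + μ) j * (j:ℝ) * y ^ (j-1) * (1-y) ^ (ν + μ - j)
      with hv
    have hB : HasDerivAt (fun z : ℝ =>
        ∑ j ∈ Finset.range (μ+1), rchoose (ν + μ) j * (1-z) ^ (ν + μ - j) * z ^ j)
        (-(Cconst μ ν * (y ^ μ * (1-y) ^ (ν - 1)))) y := by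
      have hterm : ∀ j ∈ Finset.range (μ+1), HasDerivAt (fun z : ℝ =>
          rchoose (ν + μ) j * (1-z) ^ (ν + μ - j) * z ^ j) (v j - v (j+1)) y := by
        intro j _
        have hrpow : HasDerivAt (fun z : ℝ => (1 - z) ^ (ν + μ - j))
            (-((ν + μ - j) * (1-y) ^ (ν + μ - j - 1))) y := by
          have hbase : HasDerivAt (fun z : ℝ => 1 - z) (-1) y := by
            simpa using (hasDerivAt_id y).const_sub 1
          have houter : HasDerivAt (fun z : ℝ => z ^ (ν + μ - j))
              ((ν + μ - j) * (1-y) ^ (ν + μ - j - 1)) (1 - y) :=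
            Real.hasDerivAt_rpow_const (Or.inl (ne_of_gt hy1))
          have := houter.comp y hbase
          exact this.congr_deriv (by ring)
        have h2 := ((hrpow.const_mul (rchoose (ν + μ) j)).mul (hasDerivAt_pow j y))
        refine h2.congr_deriv (Eq.symm ?_)
        have hv1 : v (j+1) = rchoose (ν + μ) j * (ν + μ - j) * y ^ j * (1-y) ^ (ν + μ - j - 1) := by
          rw [hv]
          simp only [Nat.add_sub_cancel]
          push_cast
          rw [← rchoose_mul_succ (ν + μ) j,
            show (ν + (μ:ℝ) - ((j:ℝ) + 1)) = ν + μ - j - 1 by ring]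
        rw [hv1, hv]
        simp only
        push_cast
        ring
      have hsum := HasDerivAt.fun_sum hterm
      have htel : ∑ j ∈ Finset.range (μ+1), (v j - v (j+1)) = v 0 - v (μ+1) :=
        Finset.sum_range_sub' v (μ+1)
      rw [htel] at hsum
      refine hsum.congr_deriv (Eq.symm ?_)
      have hv0 : v 0 = 0 := by rw [hv]; simp
      have hvlast : v (μ+1) = Cconst μ ν * (y ^ μ * (1-y) ^ (ν - 1)) := by
        rw [hv, Cconst_eq]
        simp only [Nat.add_sub_cancel]
        rw [show ((ν:ℝ) + μ - ((μ+1:ℕ):ℝ)) = ν - 1 by push_cast; ring]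
        push_cast
        ring
      rw [hv0, hvlast]
      ring
    have htot := hA.add hB
    rw [hH]
    refine htot.congr_deriv (Eq.symm ?_)
    rw [Esum_eq hν hy]
    ring
  have hconst : ∀ y ∈ Set.Ioo (-1:ℝ) 1, H y = H 0 := by
    intro y hy
    apply (convex_Ioo (-1:ℝ) 1).is_const_of_fderivWithin_eq_zero
      (fun z hz => ((key z hz).differentiableAt).differentiableWithinAt) ?_ hy
      (by constructor <;> norm_num)
    intro z hz
    rw [fderivWithin_of_isOpen isOpen_Ioo hz]
    rw [(key z hz).hasFDerivAt.fderiv]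
    ext v
    simp
  have hH0 : H 0 = 1 := by
    rw [hH]
    simp only [zero_pow (Nat.succ_ne_zero μ), zero_mul, zero_add, sub_zero, Real.one_rpow]
    rw [Finset.sum_eq_single 0]
    · simp [rchoose_zero]
    · intro j _ hj
      rw [zero_pow hj, mul_zero]
    · intro h
      exact absurd (Finset.mem_range.2 (Nat.succ_pos μ)) h
  have := hconst x hx
  rw [hH0] at this
  exact this

end Fser

end Aux

namespace Aux

def Vlist (μ : ℕ) (ν : ℝ) : List (ℝ × ℝ × ℤ) :=
  (List.range (μ+1)).map fun j => (-(rchoose (ν + μ) j), ν + μ - j, (j:ℤ) - ((μ:ℤ)+1))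

def Alist (μ : ℕ) : List (ℝ × ℝ × ℤ) := [((1:ℝ), (0:ℝ), -((μ:ℤ)+1))]

lemma tripSum_range (n : ℕ) (f : ℕ → ℝ × ℝ × ℤ) (x : ℝ) :
    tripSum ((List.range n).map f) x = ∑ j ∈ Finset.range n, tval (f j) x := by
  induction n with
  | zero => simp [tripSum]
  | succ n ih =>
      rw [List.range_succ, List.map_append, tripSum_append, ih, Finset.sum_range_succ]
      simp [tripSum]

lemma closed_form {μ : ℕ} {ν : ℝ} (hν : 1 ≤ ν) :
    ∀ x ∈ Set.Ioo (0:ℝ) 1, Fseries μ ν x = tripSum (Alist μ ++ Vlist μ ν) x := by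
  intro x hx
  have hx0 : x ≠ 0 := ne_of_gt hx.1
  have hx01 : x ∈ Set.Ioo (-1:ℝ) 1 := ⟨by linarith [hx.1], hx.2⟩
  have hp : (x:ℝ) ^ (μ+1) ≠ 0 := pow_ne_zero _ hx0
  apply mul_right_cancel₀ hp
  have hH := Hconst (μ := μ) hν hx01
  have hL : Fseries μ ν x * x ^ (μ+1)
      = 1 - ∑ j ∈ Finset.range (μ+1), rchoose (ν + μ) j * (1-x) ^ (ν + μ - j) * x ^ j := by
    rw [mul_comm]; linarith [hH]
  rw [hL]
  have hcons : Alist μ ++ Vlist μ ν = ((1:ℝ), (0:ℝ), -((μ:ℤ)+1)) :: Vlist μ ν := rfl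
  rw [hcons, tripSum_cons, Vlist, tripSum_range, add_mul, Finset.sum_mul]
  have h0 : tval ((1:ℝ), (0:ℝ), -((μ:ℤ)+1)) x * x ^ (μ+1) = 1 := by
    rw [tval]
    simp only [Real.rpow_zero, one_mul, mul_one]
    rw [← zpow_natCast x (μ+1), ← zpow_add₀ hx0,
      show (-((μ:ℤ) + 1) + ((μ+1:ℕ):ℤ) : ℤ) = 0 by push_cast; ring, zpow_zero]
  have hj : ∀ j ∈ Finset.range (μ+1),
      tval (-(rchoose (ν + μ) j), ν + μ - j, (j:ℤ) - ((μ:ℤ)+1)) x * x ^ (μ+1)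
        = -(rchoose (ν + μ) j * (1-x) ^ (ν + μ - j) * x ^ j) := by
    intro j _
    rw [tval]
    simp only
    rw [← zpow_natCast x (μ+1), ← zpow_natCast x j, mul_assoc, mul_assoc, ← zpow_add₀ hx0]
    rw [show (j:ℤ) - ((μ:ℤ)+1) + ((μ+1:ℕ):ℤ) = (j:ℤ) by push_cast; ring]
    ring
  rw [h0, Finset.sum_congr rfl hj, Finset.sum_neg_distrib]
  ring

theorem main_aux (μ : ℕ) (ν : ℝ) (hν : 1 ≤ ν) (r : ℕ) (hr : (r : ℝ) < ν) :
    Tendsto (iteratedDeriv r (Fseries μ ν)) (nhdsWithin 1 (Set.Iio (1 : ℝ)))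
      (nhds ((-1 : ℝ) ^ r * ∏ i ∈ Finset.range r, ((μ : ℝ) + 1 + i))) := by
  have hsplit : ∀ k : ℕ, tripStep^[k] (Alist μ ++ Vlist μ ν)
      = tripStep^[k] (Alist μ) ++ tripStep^[k] (Vlist μ ν) := by
    intro k
    induction k with
    | zero => simp
    | succ k ih => rw [Function.iterate_succ_apply', Function.iterate_succ_apply',
        Function.iterate_succ_apply', ih, tripStep_append]
  have hIoo : Set.Ioo (0:ℝ) 1 ∈ nhdsWithin 1 (Set.Iio (1:ℝ)) := by
    rw [← Set.Ioi_inter_Iio]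
    exact Filter.inter_mem (mem_nhdsWithin_of_mem_nhds (Ioi_mem_nhds one_pos))
      self_mem_nhdsWithin
  have heq : ∀ x ∈ Set.Ioo (0:ℝ) 1, iteratedDeriv r (Fseries μ ν) x
      = tripSum (tripStep^[r] (Alist μ)) x + tripSum (tripStep^[r] (Vlist μ ν)) x := by
    intro x hx
    rw [iteratedDeriv_eq_tripSum (Fseries μ ν) _ (closed_form hν) r x hx,
      hsplit r, tripSum_append]
  -- part 1
  set m : ℤ := -((μ:ℤ)+1) with hm
  have hAfun : ∀ x ∈ Set.Ioo (0:ℝ) 1,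
      tripSum (tripStep^[r] (Alist μ)) x = (∏ i ∈ Finset.range r, ((m:ℝ) - i)) * x ^ (m - r) := by
    intro x hx
    have hf : ∀ y ∈ Set.Ioo (0:ℝ) 1, (fun y : ℝ => y ^ m) y = tripSum (Alist μ) y := by
      intro y _
      simp [tripSum, Alist, tval, Real.rpow_zero, hm]
    rw [← iteratedDeriv_eq_tripSum (fun y : ℝ => y ^ m) (Alist μ) hf r x hx]
    rw [iteratedDeriv_eq_iterate]
    exact iter_deriv_zpow m x r
  have hprodeq : (∏ i ∈ Finset.range r, ((m:ℝ) - i))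
      = (-1 : ℝ) ^ r * ∏ i ∈ Finset.range r, ((μ : ℝ) + 1 + i) := by
    calc (∏ i ∈ Finset.range r, ((m:ℝ) - i))
        = ∏ i ∈ Finset.range r, ((-1 : ℝ) * ((μ : ℝ) + 1 + i)) := by
          apply Finset.prod_congr rfl
          intro i _
          rw [hm]
          push_cast
          ring
      _ = (∏ _i ∈ Finset.range r, (-1 : ℝ)) * ∏ i ∈ Finset.range r, ((μ : ℝ) + 1 + i) :=
          Finset.prod_mul_distrib
      _ = (-1 : ℝ) ^ r * ∏ i ∈ Finset.range r, ((μ : ℝ) + 1 + i) := by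
          rw [Finset.prod_const, Finset.card_range]
  have h1 : Tendsto (fun x => tripSum (tripStep^[r] (Alist μ)) x)
      (nhdsWithin 1 (Set.Iio (1:ℝ)))
      (nhds ((-1 : ℝ) ^ r * ∏ i ∈ Finset.range r, ((μ : ℝ) + 1 + i))) := by
    have hcont : ContinuousAt (fun x : ℝ => (∏ i ∈ Finset.range r, ((m:ℝ) - i)) * x ^ (m - r)) 1 :=
      (continuousAt_zpow₀ (1:ℝ) (m - r) (Or.inl one_ne_zero)).const_mul _
    have hval : (∏ i ∈ Finset.range r, ((m:ℝ) - i)) * (1:ℝ) ^ (m - r)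
        = (-1 : ℝ) ^ r * ∏ i ∈ Finset.range r, ((μ : ℝ) + 1 + i) := by
      rw [one_zpow, mul_one, hprodeq]
    have htend := hcont.tendsto.mono_left (nhdsWithin_le_nhds (s := Set.Iio (1:ℝ)))
    rw [hval] at htend
    apply htend.congr'
    filter_upwards [hIoo] with x hx
    exact (hAfun x hx).symm
  -- part 2
  have h2 : Tendsto (fun x => tripSum (tripStep^[r] (Vlist μ ν)) x)
      (nhdsWithin 1 (Set.Iio (1:ℝ))) (nhds 0) := by
    apply tendsto_tripSum_zero
    have hbase : ∀ t ∈ Vlist μ ν, t.1 = 0 ∨ ν ≤ t.2.1 := by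
      intro t ht
      rw [Vlist, List.mem_map] at ht
      obtain ⟨j, hj, rfl⟩ := ht
      right
      rw [List.mem_range] at hj
      simp only
      have : (j:ℝ) ≤ μ := by exact_mod_cast Nat.lt_succ_iff.mp hj
      linarith
    intro t ht
    rcases tripStep_iterate_invariant ν r (Vlist μ ν) hbase t ht with h | h
    · exact Or.inl h
    · right; linarith
  have := h1.add h2
  rw [add_zero] at this
  apply this.congr'
  filter_upwards [hIoo] with x hx
  exact (heq x hx).symm

end Aux


/-- For `μ ∈ ℕ`, real `ν ≥ 1`, and every natural `r < ν`, the `r`-th derivative of `F`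
satisfies `lim_{x→1⁻} F^{(r)}(x) = (−1)^r (μ+1)(μ+2)⋯(μ+r)` (empty product `= 1`). -/
theorem Fseries_deriv_limit_at_one (μ : ℕ) (ν : ℝ) (hν : 1 ≤ ν) (r : ℕ) (hr : (r : ℝ) < ν) :
    Tendsto (iteratedDeriv r (Fseries μ ν)) (nhdsWithin 1 (Set.Iio (1 : ℝ)))
      (nhds ((-1 : ℝ) ^ r * ∏ i ∈ Finset.range r, ((μ : ℝ) + 1 + i))) := by
  exact Aux.main_aux μ ν hν r hr
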